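/- For any finite simple graphs G and H with linear orders σ on V(G) and σ' on V(H), the First-Fit coloring of G□H with respect to the induced lexicographic order satisfies FF(G□H, lex) ≤ Γ(G) + Γ(H) − 1. -/

import Mathlib

open SimpleGraph

/-- First-Fit (greedy) coloring of `G` with respect to the vertex ordering given by the
injective position function `ord` (vertex `u` comes before `v` iff `ord u < ord v`).
Each vertex receives the smallest positive integer not used on earlier neighbors. -/
noncomputable def firstFit {V : Type*} (G : SimpleGraph V) (ord : V → ℕ) : V → ℕ :=
  (InvImage.wf ord Nat.lt_wfRel.wf).fix
    (fun v ih => sInf {c : ℕ | 1 ≤ c ∧ ∀ u, ∀ h : ord u < ord v, G.Adj u v → ih u h ≠ c})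

/-- `FFColors G ord` is the number of colors used by the First-Fit coloring. -/
noncomputable def FFColors {V : Type*} [Fintype V] (G : SimpleGraph V) (ord : V → ℕ) : ℕ :=
  (Finset.univ.image (firstFit G ord)).card

open Classical in
/-- First-Fit coloring of `(G, ord)` subject to the pre-coloring `C₀` on the set `S`:
vertices of `S` keep their pre-assigned colors and are skipped by the scan; every other
vertex receives the smallest positive integer not already assigned (or pre-assigned)
to a neighbor. -/
noncomputable def firstFitWith {V : Type*} (G : SimpleGraph V) (ord : V → ℕ)
    (S : Set V) (C₀ : V → ℕ) : V → ℕ :=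
  (InvImage.wf ord Nat.lt_wfRel.wf).fix
    (fun v ih =>
      if v ∈ S then C₀ v
      else sInf {c : ℕ | 1 ≤ c ∧ (∀ u, G.Adj u v → u ∈ S → C₀ u ≠ c) ∧
        ∀ u, ∀ h : ord u < ord v, G.Adj u v → u ∉ S → ih u h ≠ c})

/-- Position function of the lexicographic order on `V × W` induced by the position
functions `σ` on `V` and `σ'` on `W` (for injective `σ, σ'`: `(u,v)` comes before
`(u',v')` iff `σ u < σ u'`, or `u = u'` and `σ' v < σ' v'`). -/
noncomputable def lexPos {V W : Type*} [Fintype W] (σ : V → ℕ) (σ' : W → ℕ) : V × W → ℕ :=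
  fun p => σ p.1 * (Finset.univ.sup σ' + 1) + σ' p.2

/-- A proper coloring with colors in the positive integers. -/
def IsProperColoring {V : Type*} (G : SimpleGraph V) (C : V → ℕ) : Prop :=
  (∀ v, 1 ≤ C v) ∧ ∀ ⦃u v⦄, G.Adj u v → C u ≠ C v

/-- `D` is a `(C, ord)`-descent: `D = {v} ∪ N` where `C v = y`, `x < y` is a (positive)
color, `N` is the set of neighbors of `v` of color `x`, and every `u ∈ N` comes after
`v` in the order. -/
def IsDescent {V : Type*} (G : SimpleGraph V) (ord : V → ℕ) (C : V → ℕ) (D : Set V) : Prop :=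
  ∃ v x, 1 ≤ x ∧ x < C v ∧
    (∀ u, G.Adj u v → C u = x → ord v < ord u) ∧
    D = insert v {u | G.Adj u v ∧ C u = x}

/-- The Grundy number: the maximum of `FFColors G ord` over all vertex orderings. -/
noncomputable def grundy {V : Type*} [Fintype V] (G : SimpleGraph V) : ℕ :=
  sSup {n | ∃ ord : V → ℕ, Function.Injective ord ∧ FFColors G ord = n}

/-- The independence number of `G`. -/
noncomputable def indepNum {V : Type*} [Fintype V] (G : SimpleGraph V) : ℕ :=
  sSup {n | ∃ s : Finset V, (∀ u ∈ s, ∀ v ∈ s, ¬ G.Adj u v) ∧ s.card = n}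

/-- An `m × n` Latin rectangle: entries in `{1, …, n}`, no repeats in rows or columns. -/
def IsLatinRectangle {m n : ℕ} (R : Fin m → Fin n → ℕ) : Prop :=
  (∀ i j, R i j ∈ Finset.Icc 1 n) ∧ (∀ i, Function.Injective (R i)) ∧
    (∀ j, Function.Injective (fun i => R i j))

/-- `S` is a greedy defining set of the rectangle `R` (cells scanned in lexicographic,
i.e. row-by-row, order): the greedy completion, which skips the cells of `S` (fixed to
their values in `R`) and places in each other cell the smallest positive integer not yet
appearing in its row or column, reproduces `R`.  This is First-Fit on the rook's graph
`K_m □ K_n` subject to the pre-coloring of `S` by `R`. -/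
noncomputable def IsRectGDS {m n : ℕ} (R : Fin m → Fin n → ℕ) (S : Set (Fin m × Fin n)) : Prop :=
  firstFitWith ((⊤ : SimpleGraph (Fin m)).boxProd (⊤ : SimpleGraph (Fin n)))
    (lexPos Fin.val Fin.val) S (fun p => R p.1 p.2) = fun p => R p.1 p.2

/-- The Latin square `L_k` of order `2^k`: the entry in row `i`, column `j` is
`2^k - (i XOR j)`; equivalently the `k`-fold tensor product of `[[2,1],[1,2]]`. -/
def Lsquare (k : ℕ) : Fin (2 ^ k) → Fin (2 ^ k) → ℕ :=
  fun i j => 2 ^ k - (i.val ^^^ j.val)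
section FFBasic

variable {V : Type*} [Fintype V] (G : SimpleGraph V) (ord : V → ℕ)

private lemma firstFit_eq (v : V) :
    firstFit G ord v = sInf {c : ℕ | 1 ≤ c ∧
      ∀ u, ord u < ord v → G.Adj u v → firstFit G ord u ≠ c} := by
  unfold firstFit
  rw [WellFounded.fix_eq]

private lemma firstFit_set_nonempty (v : V) :
    {c : ℕ | 1 ≤ c ∧ ∀ u, ord u < ord v → G.Adj u v → firstFit G ord u ≠ c}.Nonempty := by
  refine ⟨Finset.univ.sup (firstFit G ord) + 1, Nat.succ_le_succ (Nat.zero_le _),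
    fun u _ _ => ?_⟩
  have : firstFit G ord u ≤ Finset.univ.sup (firstFit G ord) :=
    Finset.le_sup (Finset.mem_univ u)
  omega

private lemma firstFit_mem (v : V) :
    firstFit G ord v ∈ {c : ℕ | 1 ≤ c ∧
      ∀ u, ord u < ord v → G.Adj u v → firstFit G ord u ≠ c} := by
  rw [firstFit_eq]
  exact Nat.sInf_mem (firstFit_set_nonempty G ord v)

private lemma firstFit_pos (v : V) : 1 ≤ firstFit G ord v :=
  (firstFit_mem G ord v).1

private lemma firstFit_ne {u v : V} (h : ord u < ord v) (ha : G.Adj u v) :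
    firstFit G ord u ≠ firstFit G ord v :=
  (firstFit_mem G ord v).2 u h ha

private lemma firstFit_fan (v : V) {x : ℕ} (h1 : 1 ≤ x) (h2 : x < firstFit G ord v) :
    ∃ u, ord u < ord v ∧ G.Adj u v ∧ firstFit G ord u = x := by
  by_contra hc
  push_neg at hc
  have hxmem : x ∈ {c : ℕ | 1 ≤ c ∧
      ∀ u, ord u < ord v → G.Adj u v → firstFit G ord u ≠ c} :=
    ⟨h1, fun u hu hadj => hc u hu hadj⟩
  have hle := Nat.sInf_le hxmem
  rw [← firstFit_eq] at hle
  omega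

private lemma firstFit_le_FFColors (v : V) : firstFit G ord v ≤ FFColors G ord := by
  classical
  have hsub : Finset.Icc 1 (firstFit G ord v) ⊆ Finset.univ.image (firstFit G ord) := by
    intro x hx
    rw [Finset.mem_Icc] at hx
    rcases eq_or_lt_of_le hx.2 with he | hlt
    · exact Finset.mem_image.2 ⟨v, Finset.mem_univ v, he.symm⟩
    · obtain ⟨u, _, _, hu⟩ := firstFit_fan G ord v hx.1 hlt
      exact Finset.mem_image.2 ⟨u, Finset.mem_univ u, hu⟩
  have := Finset.card_le_card hsub
  rw [Nat.card_Icc] at this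
  unfold FFColors
  omega

private lemma FFColors_le_grundy (hord : Function.Injective ord) :
    FFColors G ord ≤ grundy G := by
  apply le_csSup
  · refine ⟨Fintype.card V, fun n hn => ?_⟩
    obtain ⟨o, _, rfl⟩ := hn
    unfold FFColors
    exact le_trans Finset.card_image_le (le_of_eq Finset.card_univ)
  · exact ⟨ord, hord, rfl⟩

end FFBasic

private lemma xor_le_add' : ∀ x y : ℕ, x ^^^ y ≤ x + y := by
  intro x
  induction x using Nat.strong_induction_on with
  | _ x IH =>
    intro y
    rcases Nat.eq_zero_or_pos x with rfl | hx
    · simp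
    · have hdiv : (x ^^^ y) / 2 = x / 2 ^^^ y / 2 := Nat.xor_div_two
      have h2 : x / 2 ^^^ y / 2 ≤ x / 2 + y / 2 :=
        IH (x / 2) (Nat.div_lt_self hx one_lt_two) (y / 2)
      rw [← hdiv] at h2
      have hmod : (x ^^^ y) % 2 = (x + y) % 2 := Nat.xor_mod_two_eq
      omega

section LexLemmas

variable {V W : Type*} [Fintype W] (σ : V → ℕ) (σ' : W → ℕ)

private lemma lexPos_lt_fst {u u' : V} (w' w : W) (h : σ u' < σ u) :
    lexPos σ σ' (u', w') < lexPos σ σ' (u, w) := by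
  unfold lexPos
  dsimp only
  have h1 : σ' w' < Finset.univ.sup σ' + 1 :=
    Nat.lt_succ_of_le (Finset.le_sup (Finset.mem_univ w'))
  have h2 : (σ u' + 1) * (Finset.univ.sup σ' + 1) ≤ σ u * (Finset.univ.sup σ' + 1) :=
    Nat.mul_le_mul_right _ h
  have h3 : (σ u' + 1) * (Finset.univ.sup σ' + 1)
      = σ u' * (Finset.univ.sup σ' + 1) + (Finset.univ.sup σ' + 1) := by ring
  omega

private lemma lexPos_lt_snd (u : V) {z v : W} (h : σ' z < σ' v) :
    lexPos σ σ' (u, z) < lexPos σ σ' (u, v) := by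
  unfold lexPos
  dsimp only
  omega

private lemma snd_lt_of_lexPos_lt {u : V} {z v : W}
    (h : lexPos σ σ' (u, z) < lexPos σ σ' (u, v)) : σ' z < σ' v := by
  unfold lexPos at h
  dsimp only at h
  omega

private lemma fst_lt_of_lexPos_lt {u' u : V} {v : W}
    (h : lexPos σ σ' (u', v) < lexPos σ σ' (u, v)) : σ u' < σ u := by
  unfold lexPos at h
  dsimp only at h
  by_contra hc
  push_neg at hc
  have : σ u * (Finset.univ.sup σ' + 1) ≤ σ u' * (Finset.univ.sup σ' + 1) :=
    Nat.mul_le_mul_right _ hc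
  omega

end LexLemmas

section Main

variable {V W : Type*} [Fintype V] [Fintype W]

private lemma lexFF_formula (G : SimpleGraph V) (H : SimpleGraph W)
    (σ : V → ℕ) (σ' : W → ℕ) :
    ∀ p : V × W, firstFit (G.boxProd H) (lexPos σ σ') p
      = ((firstFit G σ p.1 - 1) ^^^ (firstFit H σ' p.2 - 1)) + 1 := by
  suffices h : ∀ (n : ℕ) (p : V × W), lexPos σ σ' p = n →
      firstFit (G.boxProd H) (lexPos σ σ') p
        = ((firstFit G σ p.1 - 1) ^^^ (firstFit H σ' p.2 - 1)) + 1 from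
    fun p => h _ p rfl
  intro n
  induction n using Nat.strong_induction_on with
  | _ n IH =>
  rintro ⟨u, v⟩ rfl
  have ha1 : 1 ≤ firstFit G σ u := firstFit_pos G σ u
  have hb1 : 1 ≤ firstFit H σ' v := firstFit_pos H σ' v
  have hTmem : ((firstFit G σ u - 1) ^^^ (firstFit H σ' v - 1)) + 1 ∈ {c : ℕ | 1 ≤ c ∧
      ∀ q, lexPos σ σ' q < lexPos σ σ' (u, v) → (G.boxProd H).Adj q (u, v) →
        firstFit (G.boxProd H) (lexPos σ σ') q ≠ c} := by
    refine ⟨Nat.succ_le_succ (Nat.zero_le _), ?_⟩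
    rintro ⟨u', z⟩ hlt hadj
    have hq := IH _ hlt (u', z) rfl
    dsimp only at hq
    rcases SimpleGraph.boxProd_adj.1 hadj with ⟨hGadj, hzv⟩ | ⟨hHadj, huu⟩
    · -- horizontal: G-edge, second coordinates equal
      simp only at hGadj hzv
      subst hzv
      have hσlt : σ u' < σ u := fst_lt_of_lexPos_lt σ σ' hlt
      have hne : firstFit G σ u' ≠ firstFit G σ u := firstFit_ne G σ hσlt hGadj
      rw [hq]
      intro hEq
      have h' : (firstFit G σ u' - 1) ^^^ (firstFit H σ' z - 1)
          = (firstFit G σ u - 1) ^^^ (firstFit H σ' z - 1) := by omega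
      rw [Nat.xor_left_inj] at h'
      have h1' : 1 ≤ firstFit G σ u' := firstFit_pos G σ u'
      omega
    · -- vertical: H-edge, first coordinates equal
      simp only at hHadj huu
      subst huu
      have hσlt : σ' z < σ' v := snd_lt_of_lexPos_lt σ σ' hlt
      have hne : firstFit H σ' z ≠ firstFit H σ' v := firstFit_ne H σ' hσlt hHadj
      rw [hq]
      intro hEq
      have h' : (firstFit G σ u' - 1) ^^^ (firstFit H σ' z - 1)
          = (firstFit G σ u' - 1) ^^^ (firstFit H σ' v - 1) := by omega
      rw [Nat.xor_right_inj] at h'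
      have h1' : 1 ≤ firstFit H σ' z := firstFit_pos H σ' z
      omega
  have hbelow : ∀ m, m < ((firstFit G σ u - 1) ^^^ (firstFit H σ' v - 1)) + 1 →
      m ∉ {c : ℕ | 1 ≤ c ∧
      ∀ q, lexPos σ σ' q < lexPos σ σ' (u, v) → (G.boxProd H).Adj q (u, v) →
        firstFit (G.boxProd H) (lexPos σ σ') q ≠ c} := by
    rintro m hm ⟨hm1, hmix⟩
    have hg : m - 1 < (firstFit G σ u - 1) ^^^ (firstFit H σ' v - 1) := by omega
    rcases Nat.lt_xor_cases hg with hc | hc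
    · -- horizontal witness
      obtain ⟨u', hu'lt, hu'adj, hu'val⟩ :=
        firstFit_fan G σ u (x := ((m - 1) ^^^ (firstFit H σ' v - 1)) + 1)
          (Nat.succ_le_succ (Nat.zero_le _)) (by omega)
      have hlex : lexPos σ σ' (u', v) < lexPos σ σ' (u, v) :=
        lexPos_lt_fst σ σ' v v hu'lt
      have hadj : (G.boxProd H).Adj (u', v) (u, v) :=
        SimpleGraph.boxProd_adj.2 (Or.inl ⟨hu'adj, rfl⟩)
      refine hmix (u', v) hlex hadj ?_
      rw [IH _ hlex (u', v) rfl]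
      dsimp only
      rw [hu'val, Nat.add_sub_cancel, xor_cancel_right]
      omega
    · -- vertical witness
      obtain ⟨z, hzlt, hzadj, hzval⟩ :=
        firstFit_fan H σ' v (x := ((m - 1) ^^^ (firstFit G σ u - 1)) + 1)
          (Nat.succ_le_succ (Nat.zero_le _)) (by omega)
      have hlex : lexPos σ σ' (u, z) < lexPos σ σ' (u, v) :=
        lexPos_lt_snd σ σ' u hzlt
      have hadj : (G.boxProd H).Adj (u, z) (u, v) :=
        SimpleGraph.boxProd_adj.2 (Or.inr ⟨hzadj, rfl⟩)
      refine hmix (u, z) hlex hadj ?_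
      rw [IH _ hlex (u, z) rfl]
      dsimp only
      rw [hzval, Nat.add_sub_cancel, Nat.xor_comm (m - 1) (firstFit G σ u - 1),
        xor_cancel_left]
      omega
  show firstFit (G.boxProd H) (lexPos σ σ') (u, v) = _
  rw [firstFit_eq]
  refine le_antisymm (Nat.sInf_le hTmem) ?_
  by_contra hlt
  push_neg at hlt
  exact hbelow _ hlt (Nat.sInf_mem ⟨_, hTmem⟩)

end Main

/-- `FF(G □ H, lex) ≤ Γ(G) + Γ(H) - 1`. -/
theorem FF_boxProd_lex_le_grundy_add {V W : Type*} [Fintype V] [Fintype W]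
    (G : SimpleGraph V) (H : SimpleGraph W)
    (σ : V → ℕ) (σ' : W → ℕ) (hσ : Function.Injective σ) (hσ' : Function.Injective σ') :
    FFColors (G.boxProd H) (lexPos σ σ') ≤ grundy G + grundy H - 1 := by
  classical
  have key := lexFF_formula G H σ σ'
  have hsub : Finset.univ.image (firstFit (G.boxProd H) (lexPos σ σ'))
      ⊆ Finset.Icc 1 (grundy G + grundy H - 1) := by
    intro x hx
    obtain ⟨p, _, rfl⟩ := Finset.mem_image.1 hx
    have h1 : 1 ≤ firstFit G σ p.1 := firstFit_pos G σ p.1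
    have h2 : 1 ≤ firstFit H σ' p.2 := firstFit_pos H σ' p.2
    have hga : firstFit G σ p.1 ≤ grundy G :=
      le_trans (firstFit_le_FFColors G σ p.1) (FFColors_le_grundy G σ hσ)
    have hgb : firstFit H σ' p.2 ≤ grundy H :=
      le_trans (firstFit_le_FFColors H σ' p.2) (FFColors_le_grundy H σ' hσ')
    have hxle : (firstFit G σ p.1 - 1) ^^^ (firstFit H σ' p.2 - 1)
        ≤ (firstFit G σ p.1 - 1) + (firstFit H σ' p.2 - 1) := xor_le_add' _ _
    rw [key p, Finset.mem_Icc]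
    omega
  have hcard := Finset.card_le_card hsub
  rw [Nat.card_Icc] at hcard
  unfold FFColors
  omega
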